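/- The plethystic logarithm is a left inverse of the plethystic exponential: Log[Exp[G]] = G for all G in the augmentation ideal. -/

import Mathlib

/-!
STATEMENT 6. The plethystic logarithm is a left inverse of the plethystic exponential:
`Log[Exp[G]] = G` for `G` in the augmentation ideal, where
`Exp[G] = exp(∑_{n≥1} p_n[G]/n)` and `Log[1+H] = ∑_{n≥1} (μ(n)/n) p_n[log(1+H)]`,
the Adams operations satisfying `p_m ∘ p_n = p_{mn}` and `p_1 = id`.

We work in a topological commutative `ℚ`-algebra with continuous Adams operations
`ψ n : A →ₐ[ℚ] A`, formal `expA`/`logA` inverse to each other on the augmentation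
ideal, and enough summability for the rearrangement `∑_{n,m} μ(n)/(nm) ψ_{nm} G`.
-/

set_option maxHeartbeats 1000000
open ArithmeticFunction

-- fiber equiv
def fiberEquiv (k : ℕ+) :
    {p : ℕ+ × ℕ+ // p.1 * p.2 = k} ≃ (Nat.divisorsAntidiagonal (k : ℕ)) where
  toFun p := ⟨((p.1.1 : ℕ), (p.1.2 : ℕ)), by
    rw [Nat.mem_divisorsAntidiagonal]
    refine ⟨?_, k.ne_zero⟩
    show ((p.1.1 : ℕ)) * ((p.1.2 : ℕ)) = (k : ℕ)
    exact_mod_cast congrArg (fun x : ℕ+ => (x : ℕ)) p.2⟩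
  invFun x :=
    ⟨(⟨x.1.1, Nat.pos_of_ne_zero fun h0 => (Nat.mem_divisorsAntidiagonal.mp x.2).2
        (by rw [← (Nat.mem_divisorsAntidiagonal.mp x.2).1, h0, zero_mul])⟩,
      ⟨x.1.2, Nat.pos_of_ne_zero fun h0 => (Nat.mem_divisorsAntidiagonal.mp x.2).2
        (by rw [← (Nat.mem_divisorsAntidiagonal.mp x.2).1, h0, mul_zero])⟩),
      PNat.coe_injective (by rw [PNat.mul_coe]; exact (Nat.mem_divisorsAntidiagonal.mp x.2).1)⟩
  left_inv p := rfl
  right_inv x := rfl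

theorem stmt_6 {A : Type*} [CommRing A] [Algebra ℚ A] [TopologicalSpace A]
    [IsTopologicalRing A] [T2Space A]
    (ψ : ℕ+ → A →ₐ[ℚ] A)
    (hψ1 : ψ 1 = AlgHom.id ℚ A)
    (hψmul : ∀ m n : ℕ+, ψ (m * n) = (ψ m).comp (ψ n))
    (hψcont : ∀ n : ℕ+, Continuous (ψ n))
    (expA logA : A → A)
    (I : Ideal A) (hI : IsClosed (I : Set A))
    (hlogexp : ∀ a ∈ I, logA (expA a) = a)
    (G : A) (hG : G ∈ I)
    (hSG : Summable fun m : ℕ+ => ((m : ℚ)⁻¹) • ψ m G)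
    (hSGI : (∑' m : ℕ+, ((m : ℚ)⁻¹) • ψ m G) ∈ I)
    (hsum2 : Summable fun p : ℕ+ × ℕ+ =>
      ((((ArithmeticFunction.moebius p.1 : ℤ) : ℚ)) / ((p.1 : ℚ) * (p.2 : ℚ)))
        • ψ (p.1 * p.2) G) :
    (∑' n : ℕ+, (((ArithmeticFunction.moebius n : ℤ) : ℚ) / n)
        • ψ n (logA (expA (∑' m : ℕ+, ((m : ℚ)⁻¹) • ψ m G)))) = G := by
  rw [hlogexp _ hSGI]
  set S := ∑' m : ℕ+, ((m : ℚ)⁻¹) • ψ m G with hS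
  set f : ℕ+ × ℕ+ → A := fun p =>
    ((((moebius p.1 : ℤ) : ℚ)) / ((p.1 : ℚ) * (p.2 : ℚ))) • ψ (p.1 * p.2) G with hf
  have hT : HasSum f (∑' p, f p) := hsum2.hasSum
  -- step: rows
  have hrow : ∀ n : ℕ+, HasSum (fun m => f (n, m))
      ((((moebius n : ℤ) : ℚ) / (n : ℚ)) • ψ n S) := by
    intro n
    have h1 : HasSum (fun m : ℕ+ => ((m : ℚ)⁻¹) • ψ m G) S := hSG.hasSum
    have h2 := (h1.map (ψ n).toLinearMap.toAddMonoidHom (hψcont n)).const_smul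
      ((((moebius n : ℤ) : ℚ) / (n : ℚ)))
    convert h2 using 2 with m
    simp only [Function.comp_apply, AlgHom.toLinearMap_apply, LinearMap.toAddMonoidHom_coe, hf]
    rw [map_smul, hψmul, AlgHom.comp_apply, smul_smul]
    congr 1
    rw [div_mul_eq_div_div_swap, div_div]
    push_cast
    ring_nf
    rfl
  have hLHS : HasSum (fun n : ℕ+ => (((moebius n : ℤ) : ℚ) / (n : ℚ)) • ψ n S) (∑' p, f p) :=
    hT.prod_fiberwise hrow
  -- step: group by product
  have hsig : HasSum (fun x : Σ k : ℕ+, {p : ℕ+ × ℕ+ // p.1 * p.2 = k} => f x.2)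
      (∑' p, f p) :=
    ((Equiv.sigmaFiberEquiv (fun p : ℕ+ × ℕ+ => p.1 * p.2)).hasSum_iff).mpr hT
  have hfib : ∀ k : ℕ+, HasSum (fun c : {p : ℕ+ × ℕ+ // p.1 * p.2 = k} => f c)
      (if k = 1 then G else 0) := by
    intro k
    have hfin : HasSum (fun x : (Nat.divisorsAntidiagonal (k : ℕ)) => f ((fiberEquiv k).symm x))
        (∑ x : (Nat.divisorsAntidiagonal (k : ℕ)), f ((fiberEquiv k).symm x)) := hasSum_fintype _
    have := ((fiberEquiv k).symm.hasSum_iff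
      (f := fun c : {p : ℕ+ × ℕ+ // p.1 * p.2 = k} => f c)).mp hfin
    have hstep : ∀ x : (Nat.divisorsAntidiagonal (k : ℕ)),
        f (((fiberEquiv k).symm x) : ℕ+ × ℕ+)
          = ((((moebius (x : ℕ × ℕ).1 : ℤ) : ℚ)) / (k : ℚ)) • ψ k G := by
      intro x
      have hx := Nat.mem_divisorsAntidiagonal.mp x.2
      have hp := ((fiberEquiv k).symm x).2
      simp only [hf]
      rw [hp]
      congr 2
      have hd : ((x : ℕ × ℕ).1 : ℚ) * ((x : ℕ × ℕ).2 : ℚ) = ((k : ℕ) : ℚ) := by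
        exact_mod_cast congrArg (fun n : ℕ => (n : ℚ)) hx.1
      calc ((((fiberEquiv k).symm x : ℕ+ × ℕ+).1 : ℚ)) * (((fiberEquiv k).symm x : ℕ+ × ℕ+).2 : ℚ)
          = ((x : ℕ × ℕ).1 : ℚ) * ((x : ℕ × ℕ).2 : ℚ) := rfl
        _ = (k : ℚ) := hd
    have hsum : (∑ x : (Nat.divisorsAntidiagonal (k : ℕ)), f (((fiberEquiv k).symm x) : ℕ+ × ℕ+))
        = (if k = 1 then G else 0) := by
      rw [Finset.sum_congr rfl fun x _ => hstep x]
      rw [← Finset.sum_smul]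
      have hmz : (∑ y : (Nat.divisorsAntidiagonal (k : ℕ)), (((moebius (y : ℕ × ℕ).1 : ℤ) : ℚ)))
          = if (k : ℕ) = 1 then 1 else 0 := by
        rw [Finset.sum_coe_sort (Nat.divisorsAntidiagonal (k : ℕ))
          (fun y => (((moebius y.1 : ℤ) : ℚ)))]
        have h2 := congrArg (fun F : ArithmeticFunction ℤ => F (k : ℕ)) moebius_mul_coe_zeta
        simp only [mul_apply, one_apply] at h2
        have h3 : (∑ y ∈ Nat.divisorsAntidiagonal (k : ℕ), moebius y.1)
            = if (k : ℕ) = 1 then 1 else 0 := by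
          rw [← h2]
          refine Finset.sum_congr rfl fun y hy => ?_
          have hy2 : y.2 ≠ 0 := by
            have h4 := Nat.mem_divisorsAntidiagonal.mp hy
            intro h0; exact h4.2 (by rw [← h4.1, h0, mul_zero])
          simp [natCoe_apply, ArithmeticFunction.zeta_apply_ne hy2]
        rw [← Int.cast_sum, h3]
        split <;> simp
      rw [← Finset.sum_div, hmz]
      by_cases hk : k = 1
      · subst hk
        simp [hψ1]
      · have hk' : (k : ℕ) ≠ 1 := fun h => hk (PNat.coe_injective h)
        simp [hk, hk']
    rw [← hsum]
    exact this
  have hG1 : HasSum (fun k : ℕ+ => if k = 1 then G else 0) G := hasSum_ite_eq 1 G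
  have := (hsig.sigma hfib).unique hG1
  rw [hLHS.tsum_eq, this]
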